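/- For any λ ∈ Λ_{p,q}^∘ with λ ≠ λ_{p,q}, there exists i ∈ I_{p,q} such that the labels of λ at vertices i and i+1 form one of the pairs ∘∨, ∘∧, ∘×, ∨×, ∧×, ∨∧; consequently there exists a unique μ ∈ Λ_{p,q}^∘ with an edge μ →ᵢ λ in the crystal graph. -/

import Mathlib

/-- The four possible labels of a vertex of a diagrammatic weight. -/
inductive Label : Type
  | circ   -- ∘
  | wedge  -- ∧
  | vee    -- ∨
  | times  -- ×
  deriving DecidableEq

/-- The set `Λ(m|n)` of diagrammatic weights: labelings of `ℤ` in which a total of `m`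
vertices are labelled `×` or `∨`, a total of `n` vertices are labelled `∘` or `∨`,
and all remaining (cofinitely many) vertices are labelled `∧`. -/
def LamSet (m n : ℕ) : Set (ℤ → Label) :=
  {f | {i : ℤ | f i = Label.times ∨ f i = Label.vee}.Finite ∧
       {i : ℤ | f i = Label.times ∨ f i = Label.vee}.ncard = m ∧
       {i : ℤ | f i = Label.circ ∨ f i = Label.vee}.Finite ∧
       {i : ℤ | f i = Label.circ ∨ f i = Label.vee}.ncard = n}

/-- The height of a diagrammatic weight:
`ht(λ) = Σ_{i : λ(i) = ×} i − Σ_{i : λ(i) = ∘} i`. -/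
noncomputable def ht (f : ℤ → Label) : ℤ :=
  (∑ᶠ i ∈ {i : ℤ | f i = Label.times}, i) - (∑ᶠ i ∈ {i : ℤ | f i = Label.circ}, i)

/-- The crystal graph edge relation `μ →ᵢ λ` of colour `i`: `λ` is obtained from `μ` by
changing the labels at vertices `i` and `i+1` according to one of the six local moves
`∨∘ → ∘∨`, `∧∘ → ∘∧`, `×∨ → ∨×`, `×∧ → ∧×`, `×∘ → ∨∧`, `∨∧ → ∘×`,
all other vertices being unchanged. -/
def CrystalEdge (i : ℤ) (mu lam : ℤ → Label) : Prop :=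
  (∀ j : ℤ, j ≠ i → j ≠ i + 1 → lam j = mu j) ∧
  ((mu i = Label.vee ∧ mu (i+1) = Label.circ ∧ lam i = Label.circ ∧ lam (i+1) = Label.vee) ∨
   (mu i = Label.wedge ∧ mu (i+1) = Label.circ ∧ lam i = Label.circ ∧ lam (i+1) = Label.wedge) ∨
   (mu i = Label.times ∧ mu (i+1) = Label.vee ∧ lam i = Label.vee ∧ lam (i+1) = Label.times) ∨
   (mu i = Label.times ∧ mu (i+1) = Label.wedge ∧ lam i = Label.wedge ∧ lam (i+1) = Label.times) ∨
   (mu i = Label.times ∧ mu (i+1) = Label.circ ∧ lam i = Label.vee ∧ lam (i+1) = Label.wedge) ∨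
   (mu i = Label.vee ∧ mu (i+1) = Label.wedge ∧ lam i = Label.circ ∧ lam (i+1) = Label.times))

/-- The ground-state weight `λ_{p,q}`: `×` on vertices `p-m+1, …, p`, `∘` on vertices
`q+1, …, q+n`, and `∧` elsewhere. -/
def lamPQ (m n : ℕ) (p q : ℤ) : ℤ → Label := fun i =>
  if p - m + 1 ≤ i ∧ i ≤ p then Label.times
  else if q + 1 ≤ i ∧ i ≤ q + n then Label.circ
  else Label.wedge

/-- The strip condition defining `Λ_{p,q}`: the label is `∧` at every vertex outside the
interval `I_{p,q}⁺ = {p-m+1, …, q+n}`. -/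
def InStrip (m n : ℕ) (p q : ℤ) : Set (ℤ → Label) :=
  {f | ∀ i : ℤ, (i < p - m + 1 ∨ q + n < i) → f i = Label.wedge}

/-- The balance condition defining `Λ_{p,q}^∘` inside `Λ_{p,q}`: for every
`j ∈ I_{p,q}⁺`, among the vertices `j, …, q+n` the number of `∧`'s is at least the
number of `∨`'s. -/
def BalancedWt (m n : ℕ) (p q : ℤ) (f : ℤ → Label) : Prop :=
  ∀ j : ℤ, p - m + 1 ≤ j → j ≤ q + n →
    {i : ℤ | j ≤ i ∧ i ≤ q + n ∧ f i = Label.vee}.ncard ≤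
    {i : ℤ | j ≤ i ∧ i ≤ q + n ∧ f i = Label.wedge}.ncard

section CPAux

/-- signed count of vertices labelled `L` in `[j, N]`. -/
noncomputable def cnt (N : ℤ) (f : ℤ → Label) (L : Label) (j : ℤ) : ℤ :=
  ∑ k ∈ Finset.Icc j N, if f k = L then (1 : ℤ) else 0

lemma cnt_nonneg (N : ℤ) (f : ℤ → Label) (L : Label) (j : ℤ) : 0 ≤ cnt N f L j :=
  Finset.sum_nonneg fun k _ => by split <;> norm_num

lemma ncard_cnt (N : ℤ) (f : ℤ → Label) (L : Label) (j : ℤ) :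
    ({i : ℤ | j ≤ i ∧ i ≤ N ∧ f i = L}.ncard : ℤ) = cnt N f L j := by
  have h : {i : ℤ | j ≤ i ∧ i ≤ N ∧ f i = L} =
      ↑((Finset.Icc j N).filter (fun i => f i = L)) := by
    ext k; simp [Finset.mem_Icc, and_assoc]
  rw [h, Set.ncard_coe_finset, Finset.card_filter]
  push_cast
  rfl

lemma cnt_step {N j : ℤ} (h : j ≤ N) (f : ℤ → Label) (L : Label) :
    cnt N f L j = (if f j = L then 1 else 0) + cnt N f L (j + 1) := by
  have hs : Finset.Icc j N = insert j (Finset.Icc (j + 1) N) := by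
    ext k; simp only [Finset.mem_Icc, Finset.mem_insert]; omega
  rw [cnt, hs, Finset.sum_insert (by simp only [Finset.mem_Icc]; omega)]
  rfl

lemma cnt_congr {N j : ℤ} {f g : ℤ → Label} (L : Label)
    (h : ∀ k, j ≤ k → k ≤ N → g k = f k) : cnt N g L j = cnt N f L j :=
  Finset.sum_congr rfl fun k hk => by
    rw [Finset.mem_Icc] at hk; rw [h k hk.1 hk.2]

lemma cnt_diff2 {N j i : ℤ} {f g : ℤ → Label} (L : Label)
    (hji : j ≤ i) (hiN : i + 1 ≤ N)
    (hoff : ∀ k, k ≠ i → k ≠ i + 1 → g k = f k) :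
    cnt N g L j = cnt N f L j
      + ((if g i = L then 1 else 0) - (if f i = L then 1 else 0))
      + ((if g (i+1) = L then 1 else 0) - (if f (i+1) = L then 1 else 0)) := by
  have key : cnt N g L j - cnt N f L j
      = ∑ k ∈ Finset.Icc j N,
          ((if g k = L then (1:ℤ) else 0) - (if f k = L then 1 else 0)) := by
    rw [cnt, cnt, ← Finset.sum_sub_distrib]
  have h2 : ∑ k ∈ Finset.Icc j N,
        ((if g k = L then (1:ℤ) else 0) - (if f k = L then 1 else 0))
      = ∑ k ∈ ({i, i+1} : Finset ℤ),
          ((if g k = L then (1:ℤ) else 0) - (if f k = L then 1 else 0)) := by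
    refine (Finset.sum_subset ?_ ?_).symm
    · intro k hk
      simp only [Finset.mem_insert, Finset.mem_singleton] at hk
      rw [Finset.mem_Icc]; omega
    · intro k _ hk
      simp only [Finset.mem_insert, Finset.mem_singleton] at hk
      push_neg at hk
      rw [hoff k hk.1 hk.2]; ring
  rw [Finset.sum_pair (by omega : i ≠ i + 1)] at h2
  have := key.trans h2
  linarith

lemma cnt_diff1 {N j u : ℤ} {f g : ℤ → Label} (L : Label)
    (hju : j ≤ u) (huN : u ≤ N)
    (hoff : ∀ k, j ≤ k → k ≤ N → k ≠ u → g k = f k) :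
    cnt N g L j = cnt N f L j
      + ((if g u = L then 1 else 0) - (if f u = L then 1 else 0)) := by
  have key : cnt N g L j - cnt N f L j
      = ∑ k ∈ Finset.Icc j N,
          ((if g k = L then (1:ℤ) else 0) - (if f k = L then 1 else 0)) := by
    rw [cnt, cnt, ← Finset.sum_sub_distrib]
  have h2 : ∑ k ∈ Finset.Icc j N,
        ((if g k = L then (1:ℤ) else 0) - (if f k = L then 1 else 0))
      = ∑ k ∈ ({u} : Finset ℤ),
          ((if g k = L then (1:ℤ) else 0) - (if f k = L then 1 else 0)) := by
    refine (Finset.sum_subset ?_ ?_).symm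
    · intro k hk
      simp only [Finset.mem_singleton] at hk
      rw [Finset.mem_Icc]; omega
    · intro k hk hku
      simp only [Finset.mem_singleton] at hku
      rw [Finset.mem_Icc] at hk
      rw [hoff k hk.1 hk.2 hku]; ring
  rw [Finset.sum_singleton] at h2
  have := key.trans h2
  linarith

lemma set_eq_helper {f g : ℤ → Label} {i : ℤ} (P : Label → Prop)
    (hoff : ∀ k, k ≠ i → k ≠ i + 1 → g k = f k)
    (h1 : P (g i) ↔ P (f i)) (h2 : P (g (i+1)) ↔ P (f (i+1))) :
    {k : ℤ | P (g k)} = {k : ℤ | P (f k)} := by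
  ext k
  by_cases hk : k = i
  · subst hk; exact h1
  · by_cases hk' : k = i + 1
    · subst hk'; exact h2
    · simp only [Set.mem_setOf_eq, hoff k hk hk']

lemma set_exchange_helper {f g : ℤ → Label} {u v : ℤ} (P : Label → Prop)
    (huv : v ≠ u)
    (hoff : ∀ k, k ≠ u → k ≠ v → g k = f k)
    (hfu : P (f u)) (hfv : ¬ P (f v)) (hgu : ¬ P (g u)) (hgv : P (g v)) :
    {k : ℤ | P (g k)} = insert v ({k : ℤ | P (f k)} \ {u}) := by
  ext k
  simp only [Set.mem_setOf_eq, Set.mem_insert_iff, Set.mem_diff,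
    Set.mem_singleton_iff]
  by_cases hk : k = u
  · subst hk
    constructor
    · intro h; exact absurd h hgu
    · rintro (rfl | ⟨h, hne⟩)
      · exact absurd hgv hgu
      · exact absurd rfl hne
  · by_cases hk' : k = v
    · subst hk'
      constructor
      · intro _; exact Or.inl rfl
      · intro _; exact hgv
    · rw [hoff k hk hk']
      constructor
      · intro h; exact Or.inr ⟨h, hk⟩
      · rintro (rfl | ⟨h, -⟩)
        · exact absurd rfl hk'
        · exact h

lemma move_set (P : Label → Prop) {f g : ℤ → Label} {i : ℤ}
    (hoff : ∀ k, k ≠ i → k ≠ i + 1 → g k = f k)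
    (hfin : {k : ℤ | P (f k)}.Finite)
    (hcase : ((P (g i) ↔ P (f i)) ∧ (P (g (i+1)) ↔ P (f (i+1))))
        ∨ (P (g i) ∧ ¬ P (f i) ∧ ¬ P (g (i+1)) ∧ P (f (i+1)))
        ∨ (¬ P (g i) ∧ P (f i) ∧ P (g (i+1)) ∧ ¬ P (f (i+1)))) :
    {k : ℤ | P (g k)}.Finite ∧ {k : ℤ | P (g k)}.ncard = {k : ℤ | P (f k)}.ncard := by
  rcases hcase with ⟨hc1, hc2⟩ | ⟨c1, c2, c3, c4⟩ | ⟨c1, c2, c3, c4⟩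
  · rw [set_eq_helper P hoff hc1 hc2]
    exact ⟨hfin, rfl⟩
  · have hset : {k : ℤ | P (g k)} = insert i ({k : ℤ | P (f k)} \ {i+1}) :=
      set_exchange_helper (u := i+1) (v := i) P (by omega)
        (fun k h h' => hoff k h' h) c4 c2 c3 c1
    rw [hset]
    exact ⟨(hfin.diff).insert i, Set.ncard_exchange c2 c4⟩
  · have hset : {k : ℤ | P (g k)} = insert (i+1) ({k : ℤ | P (f k)} \ {i}) :=
      set_exchange_helper (u := i) (v := i+1) P (by omega) hoff c2 c4 c1 c3
    rw [hset]
    exact ⟨(hfin.diff).insert (i+1), Set.ncard_exchange c4 c2⟩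

lemma initseg (S : Set ℤ) (a : ℤ) (hfin : S.Finite) (hsub : S ⊆ Set.Ici a)
    (hdc : ∀ x ∈ S, ∀ y, a ≤ y → y ≤ x → y ∈ S) :
    ∀ x, x ∈ S ↔ a ≤ x ∧ x < a + S.ncard := by
  intro x
  constructor
  · intro hx
    refine ⟨hsub hx, ?_⟩
    have hss : Set.Icc a x ⊆ S := fun y hy => hdc x hx y hy.1 hy.2
    have h1 : (Set.Icc a x).ncard ≤ S.ncard := Set.ncard_le_ncard hss hfin
    rw [show Set.Icc a x = ↑(Finset.Icc a x) from (Finset.coe_Icc a x).symm,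
      Set.ncard_coe_finset, Int.card_Icc] at h1
    have hax : a ≤ x := hsub hx
    omega
  · rintro ⟨h1, h2⟩
    by_contra hx
    have hss : S ⊆ Set.Ico a x := by
      intro z hz
      refine ⟨hsub hz, ?_⟩
      by_contra hzx
      push_neg at hzx
      exact hx (hdc z hz x h1 hzx)
    have h4 := Set.ncard_le_ncard hss (Set.finite_Ico a x)
    rw [show Set.Ico a x = ↑(Finset.Ico a x) from (Finset.coe_Ico a x).symm,
      Set.ncard_coe_finset, Int.card_Ico] at h4
    omega

lemma finseg (S : Set ℤ) (b : ℤ) (hfin : S.Finite) (hsub : S ⊆ Set.Iic b)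
    (huc : ∀ x ∈ S, ∀ y, x ≤ y → y ≤ b → y ∈ S) :
    ∀ x, x ∈ S ↔ b - S.ncard < x ∧ x ≤ b := by
  intro x
  constructor
  · intro hx
    refine ⟨?_, hsub hx⟩
    have hss : Set.Icc x b ⊆ S := fun y hy => huc x hx y hy.1 hy.2
    have h1 : (Set.Icc x b).ncard ≤ S.ncard := Set.ncard_le_ncard hss hfin
    rw [show Set.Icc x b = ↑(Finset.Icc x b) from (Finset.coe_Icc x b).symm,
      Set.ncard_coe_finset, Int.card_Icc] at h1
    have hax : x ≤ b := hsub hx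
    omega
  · rintro ⟨h1, h2⟩
    by_contra hx
    have hss : S ⊆ Set.Ioc x b := by
      intro z hz
      refine ⟨?_, hsub hz⟩
      by_contra hzx
      push_neg at hzx
      exact hx (huc z hz x hzx h2)
    have h4 := Set.ncard_le_ncard hss (Set.finite_Ioc x b)
    rw [show Set.Ioc x b = ↑(Finset.Ioc x b) from (Finset.coe_Ioc x b).symm,
      Set.ncard_coe_finset, Int.card_Ioc] at h4
    omega

end CPAux

section CPAux2

/-- replace the labels at `i` and `i+1` by `a` and `b`. -/
def twk (i : ℤ) (a b : Label) (f : ℤ → Label) : ℤ → Label :=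
  fun k => if k = i then a else if k = i + 1 then b else f k

lemma twk_off (i : ℤ) (a b : Label) (f : ℤ → Label) {k : ℤ}
    (h : k ≠ i) (h' : k ≠ i + 1) : twk i a b f k = f k := by
  simp only [twk]; rw [if_neg h, if_neg h']

lemma twk_fst (i : ℤ) (a b : Label) (f : ℤ → Label) : twk i a b f i = a := by
  simp [twk]

lemma twk_snd (i : ℤ) (a b : Label) (f : ℤ → Label) : twk i a b f (i + 1) = b := by
  simp only [twk]
  rw [if_neg (show ¬ (i + 1 = i) by omega)]
  simp

lemma balancedWt_iff (m n : ℕ) (p q : ℤ) (f : ℤ → Label) :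
    BalancedWt m n p q f ↔ ∀ j : ℤ, p - m + 1 ≤ j → j ≤ q + n →
      cnt (q + n) f Label.vee j ≤ cnt (q + n) f Label.wedge j := by
  constructor <;> intro h j h1 h2
  · have h3 := h j h1 h2
    rw [← ncard_cnt (q + n) f Label.vee j, ← ncard_cnt (q + n) f Label.wedge j]
    exact_mod_cast h3
  · have h3 := h j h1 h2
    rw [← ncard_cnt (q + n) f Label.vee j, ← ncard_cnt (q + n) f Label.wedge j] at h3
    exact_mod_cast h3

lemma edge_unique {i : ℤ} {lam mu mu' : ℤ → Label}
    (h : CrystalEdge i mu lam) (h' : CrystalEdge i mu' lam) : mu = mu' := by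
  obtain ⟨ho, hc⟩ := h
  obtain ⟨ho', hc'⟩ := h'
  funext k
  by_cases hk : k = i
  · subst hk
    rcases hc with ⟨e1,e2,e3,e4⟩|⟨e1,e2,e3,e4⟩|⟨e1,e2,e3,e4⟩|⟨e1,e2,e3,e4⟩|⟨e1,e2,e3,e4⟩|⟨e1,e2,e3,e4⟩ <;>
      rcases hc' with ⟨f1,f2,f3,f4⟩|⟨f1,f2,f3,f4⟩|⟨f1,f2,f3,f4⟩|⟨f1,f2,f3,f4⟩|⟨f1,f2,f3,f4⟩|⟨f1,f2,f3,f4⟩ <;>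
      simp_all
  · by_cases hk' : k = i + 1
    · subst hk'
      rcases hc with ⟨e1,e2,e3,e4⟩|⟨e1,e2,e3,e4⟩|⟨e1,e2,e3,e4⟩|⟨e1,e2,e3,e4⟩|⟨e1,e2,e3,e4⟩|⟨e1,e2,e3,e4⟩ <;>
        rcases hc' with ⟨f1,f2,f3,f4⟩|⟨f1,f2,f3,f4⟩|⟨f1,f2,f3,f4⟩|⟨f1,f2,f3,f4⟩|⟨f1,f2,f3,f4⟩|⟨f1,f2,f3,f4⟩ <;>
        simp_all
    · rw [← ho k hk hk', ← ho' k hk hk']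

lemma build_move (m n : ℕ) (p q i : ℤ) (lam : ℤ → Label)
    (h1 : lam ∈ LamSet m n) (h2 : lam ∈ InStrip m n p q)
    (hbalZ : ∀ j : ℤ, p - m + 1 ≤ j →
      cnt (q + n) lam Label.vee j ≤ cnt (q + n) lam Label.wedge j)
    (hi : p - m + 1 ≤ i) (hi' : i + 1 ≤ q + n)
    (a b : Label)
    (hmove :
      (lam i = Label.circ ∧ lam (i+1) = Label.vee ∧ a = Label.vee ∧ b = Label.circ) ∨
      (lam i = Label.circ ∧ lam (i+1) = Label.wedge ∧ a = Label.wedge ∧ b = Label.circ) ∨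
      (lam i = Label.circ ∧ lam (i+1) = Label.times ∧ a = Label.vee ∧ b = Label.wedge) ∨
      (lam i = Label.vee ∧ lam (i+1) = Label.times ∧ a = Label.times ∧ b = Label.vee) ∨
      (lam i = Label.wedge ∧ lam (i+1) = Label.times ∧ a = Label.times ∧ b = Label.wedge) ∨
      (lam i = Label.vee ∧ lam (i+1) = Label.wedge ∧ a = Label.times ∧ b = Label.circ)) :
    ∃! mu : ℤ → Label,
      mu ∈ LamSet m n ∧ mu ∈ InStrip m n p q ∧ BalancedWt m n p q mu ∧
      CrystalEdge i mu lam := by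
  have hoff : ∀ k : ℤ, k ≠ i → k ≠ i + 1 → twk i a b lam k = lam k :=
    fun k h h' => twk_off i a b lam h h'
  have hgi : twk i a b lam i = a := twk_fst i a b lam
  have hgi1 : twk i a b lam (i + 1) = b := twk_snd i a b lam
  have hstrip : twk i a b lam ∈ InStrip m n p q := by
    intro k hk
    rw [hoff k (by omega) (by omega)]
    exact h2 k hk
  obtain ⟨hf1, hf2, hf3, hf4⟩ := h1
  rcases hmove with hm | hm | hm | hm | hm | hm
  all_goals (
      obtain ⟨hA, hB, ha, hb⟩ := hm
      have hga : twk i a b lam i = _ := hgi.trans ha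
      have hgb : twk i a b lam (i + 1) = _ := hgi1.trans hb
      have hE : CrystalEdge i (twk i a b lam) lam := by
        refine ⟨fun j hj hj' => (hoff j hj hj').symm, ?_⟩
        simp [hga, hgb, hA, hB]
      have hL : twk i a b lam ∈ LamSet m n := by
        obtain ⟨hT1, hT2⟩ := move_set (fun L => L = Label.times ∨ L = Label.vee) hoff hf1
          (by simp [hga, hgb, hA, hB])
        obtain ⟨hN1, hN2⟩ := move_set (fun L => L = Label.circ ∨ L = Label.vee) hoff hf3
          (by simp [hga, hgb, hA, hB])
        exact ⟨hT1, hT2.trans hf2, hN1, hN2.trans hf4⟩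
      have hBal : BalancedWt m n p q (twk i a b lam) := by
        rw [balancedWt_iff]
        intro j hj1 hj2
        have e1 := cnt_congr (N := q + n) (j := i + 1 + 1) (f := lam) (g := twk i a b lam)
          Label.vee (fun k hk _ => hoff k (by omega) (by omega))
        have e2 := cnt_congr (N := q + n) (j := i + 1 + 1) (f := lam) (g := twk i a b lam)
          Label.wedge (fun k hk _ => hoff k (by omega) (by omega))
        rcases lt_trichotomy j (i + 1) with hji | hji | hji
        · have hv := cnt_diff2 (N := q + n) (j := j) (i := i) (f := lam) (g := twk i a b lam)
            Label.vee (by omega) hi' hoff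
          have hw := cnt_diff2 (N := q + n) (j := j) (i := i) (f := lam) (g := twk i a b lam)
            Label.wedge (by omega) hi' hoff
          rw [hga, hgb, hA, hB] at hv hw
          simp at hv hw
          linarith [hbalZ j hj1]
        · subst hji
          have sv := cnt_step (show i + 1 ≤ q + (n : ℤ) from hi') (twk i a b lam) Label.vee
          have sw := cnt_step (show i + 1 ≤ q + (n : ℤ) from hi') (twk i a b lam) Label.wedge
          have tv := cnt_step (show i ≤ q + (n : ℤ) by omega) lam Label.vee
          have tw := cnt_step (show i ≤ q + (n : ℤ) by omega) lam Label.wedge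
          have tv2 := cnt_step (show i + 1 ≤ q + (n : ℤ) from hi') lam Label.vee
          have tw2 := cnt_step (show i + 1 ≤ q + (n : ℤ) from hi') lam Label.wedge
          rw [hgb] at sv sw
          rw [hA] at tv tw
          rw [hB] at tv2 tw2
          simp at sv sw tv tw tv2 tw2
          linarith [hbalZ i (by omega), hbalZ (i + 1) (by omega),
            hbalZ (i + 1 + 1) (by omega), e1, e2, sv, sw, tv, tw, tv2, tw2]
        · have hv := cnt_congr (N := q + n) (j := j) (f := lam) (g := twk i a b lam)
            Label.vee (fun k hk _ => hoff k (by omega) (by omega))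
          have hw := cnt_congr (N := q + n) (j := j) (f := lam) (g := twk i a b lam)
            Label.wedge (fun k hk _ => hoff k (by omega) (by omega))
          rw [hv, hw]
          exact hbalZ j hj1
      refine ⟨twk i a b lam, ⟨hL, hstrip, hBal, hE⟩, ?_⟩
      rintro mu' ⟨-, -, -, hE'⟩
      exact edge_unique hE' hE)

end CPAux2

section CPAux3

/-- rank order `∘ < ∨ < ∧ < ×`. -/
def rankL : Label → ℕ
  | Label.circ => 0
  | Label.vee => 1
  | Label.wedge => 2
  | Label.times => 3

end CPAux3


/-- For any `λ ∈ Λ_{p,q}^∘` with `λ ≠ λ_{p,q}` there exists `i ∈ I_{p,q}` such that the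
labels of `λ` at vertices `i` and `i+1` form one of the pairs
`∘∨, ∘∧, ∘×, ∨×, ∧×, ∨∧`; consequently there exists a unique `μ ∈ Λ_{p,q}^∘` with an
edge `μ →ᵢ λ` in the crystal graph. -/
theorem exists_crystal_predecessor (m n : ℕ) (p q : ℤ) (hpq : p ≤ q)
    (lam : ℤ → Label) (h1 : lam ∈ LamSet m n) (h2 : lam ∈ InStrip m n p q)
    (h3 : BalancedWt m n p q lam) (hne : lam ≠ lamPQ m n p q) :
    ∃ i : ℤ, (p - m + 1 ≤ i ∧ i ≤ q + n - 1) ∧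
      ((lam i = Label.circ ∧ lam (i+1) = Label.vee) ∨
       (lam i = Label.circ ∧ lam (i+1) = Label.wedge) ∨
       (lam i = Label.circ ∧ lam (i+1) = Label.times) ∨
       (lam i = Label.vee ∧ lam (i+1) = Label.times) ∨
       (lam i = Label.wedge ∧ lam (i+1) = Label.times) ∨
       (lam i = Label.vee ∧ lam (i+1) = Label.wedge)) ∧
      ∃! mu : ℤ → Label,
        mu ∈ LamSet m n ∧ mu ∈ InStrip m n p q ∧ BalancedWt m n p q mu ∧
        CrystalEdge i mu lam := by
  have hbalZ : ∀ j : ℤ, p - m + 1 ≤ j →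
      cnt (q + n) lam Label.vee j ≤ cnt (q + n) lam Label.wedge j := by
    intro j hj
    rcases le_or_gt j (q + n) with h | h
    · exact (balancedWt_iff m n p q lam).1 h3 j hj h
    · have he : Finset.Icc j (q + (n : ℤ)) = ∅ := Finset.Icc_eq_empty (by omega)
      simp [cnt, he]
  have key : ∃ i : ℤ, (p - m + 1 ≤ i ∧ i ≤ q + n - 1) ∧
      ((lam i = Label.circ ∧ lam (i+1) = Label.vee) ∨
       (lam i = Label.circ ∧ lam (i+1) = Label.wedge) ∨
       (lam i = Label.circ ∧ lam (i+1) = Label.times) ∨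
       (lam i = Label.vee ∧ lam (i+1) = Label.times) ∨
       (lam i = Label.wedge ∧ lam (i+1) = Label.times) ∨
       (lam i = Label.vee ∧ lam (i+1) = Label.wedge)) := by
    by_contra hno
    have hno' := not_exists.mp hno
    have hdec : ∀ i : ℤ, p - m + 1 ≤ i → i ≤ q + n - 1 →
        rankL (lam (i+1)) ≤ rankL (lam i) := by
      intro i hx hy
      by_contra hlt
      push_neg at hlt
      apply hno' i
      refine ⟨⟨hx, hy⟩, ?_⟩
      rcases hl1 : lam i <;> rcases hl2 : lam (i+1) <;>
        simp [rankL, hl1, hl2] at hlt <;> simp [hl1, hl2]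
    have hmono : ∀ a0 : ℤ, p - m + 1 ≤ a0 → ∀ b0 : ℤ, a0 ≤ b0 →
        b0 ≤ q + n → rankL (lam b0) ≤ rankL (lam a0) := by
      intro a0 ha0
      refine Int.le_induction
        (motive := fun b0 _ => b0 ≤ q + n → rankL (lam b0) ≤ rankL (lam a0)) ?_ ?_
      · intro _; exact le_rfl
      · intro c hc ih hb
        exact le_trans (hdec c (by omega) (by omega)) (ih (by omega))
    have hveeN : ∀ j : ℤ, lam j ≠ Label.vee := by
      intro j hj
      have hjs : p - m + 1 ≤ j ∧ j ≤ q + n := by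
        by_contra hc
        have hout : j < p - m + 1 ∨ q + n < j := by omega
        have h5 := h2 j hout
        rw [hj] at h5
        exact Label.noConfusion h5
      have hw0 : cnt (q + n) lam Label.wedge j = 0 := by
        unfold cnt
        apply Finset.sum_eq_zero
        intro k hk
        rw [Finset.mem_Icc] at hk
        rw [if_neg]
        intro hkw
        have h6 := hmono j hjs.1 k hk.1 hk.2
        rw [hj, hkw] at h6
        simp [rankL] at h6
      have hv1 : (1:ℤ) ≤ cnt (q + n) lam Label.vee j := by
        rw [cnt_step hjs.2 lam Label.vee, hj, if_pos rfl]
        have := cnt_nonneg (q + n) lam Label.vee (j + 1)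
        linarith
      have h7 := hbalZ j hjs.1
      linarith
    -- the set of `×`'s
    have hXeq : {k : ℤ | lam k = Label.times ∨ lam k = Label.vee} =
        {k : ℤ | lam k = Label.times} := by
      ext k; simp [hveeN k]
    have hXfin := h1.1
    have hXcard := h1.2.1
    rw [hXeq] at hXfin hXcard
    have hXstrip : ∀ k : ℤ, lam k = Label.times → p - m + 1 ≤ k ∧ k ≤ q + n := by
      intro k hk
      by_contra hc
      have hout : k < p - m + 1 ∨ q + n < k := by omega
      have h5 := h2 k hout
      rw [hk] at h5
      exact Label.noConfusion h5
    have hXsub : {k : ℤ | lam k = Label.times} ⊆ Set.Ici (p - m + 1 : ℤ) :=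
      fun k hk => (hXstrip k hk).1
    have hXdc : ∀ x ∈ {k : ℤ | lam k = Label.times}, ∀ y, p - m + 1 ≤ y → y ≤ x →
        y ∈ {k : ℤ | lam k = Label.times} := by
      intro x hx y hy hyx
      simp only [Set.mem_setOf_eq] at hx ⊢
      have h5 := hmono y hy x hyx (hXstrip x hx).2
      rcases hly : lam y with _ | _ | _ | _
      · exfalso; rw [hx, hly] at h5; simp [rankL] at h5
      · exfalso; rw [hx, hly] at h5; simp [rankL] at h5
      · exact absurd hly (hveeN y)
      · rfl
    have charX := initseg _ _ hXfin hXsub hXdc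
    rw [hXcard] at charX
    -- the set of `∘`'s
    have hOeq : {k : ℤ | lam k = Label.circ ∨ lam k = Label.vee} =
        {k : ℤ | lam k = Label.circ} := by
      ext k; simp [hveeN k]
    have hOfin := h1.2.2.1
    have hOcard := h1.2.2.2
    rw [hOeq] at hOfin hOcard
    have hOstrip : ∀ k : ℤ, lam k = Label.circ → p - m + 1 ≤ k ∧ k ≤ q + n := by
      intro k hk
      by_contra hc
      have hout : k < p - m + 1 ∨ q + n < k := by omega
      have h5 := h2 k hout
      rw [hk] at h5
      exact Label.noConfusion h5
    have hOsub : {k : ℤ | lam k = Label.circ} ⊆ Set.Iic (q + n : ℤ) :=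
      fun k hk => (hOstrip k hk).2
    have hOuc : ∀ x ∈ {k : ℤ | lam k = Label.circ}, ∀ y, x ≤ y → y ≤ q + n →
        y ∈ {k : ℤ | lam k = Label.circ} := by
      intro x hx y hxy hy
      simp only [Set.mem_setOf_eq] at hx ⊢
      have h5 := hmono x (hOstrip x hx).1 y hxy hy
      rcases hly : lam y with _ | _ | _ | _
      · rfl
      · exfalso; rw [hx, hly] at h5; simp [rankL] at h5
      · exact absurd hly (hveeN y)
      · exfalso; rw [hx, hly] at h5; simp [rankL] at h5
    have charO := finseg _ _ hOfin hOsub hOuc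
    rw [hOcard] at charO
    apply hne
    funext k
    have hcX := charX k
    have hcO := charO k
    simp only [Set.mem_setOf_eq] at hcX hcO
    simp only [lamPQ]
    split_ifs with hif1 hif2
    · exact hcX.2 ⟨hif1.1, by omega⟩
    · exact hcO.2 ⟨by omega, hif2.2⟩
    · rcases hl : lam k with _ | _ | _ | _
      · exact absurd (hcO.1 hl) (by omega)
      · rfl
      · exact absurd hl (hveeN k)
      · exact absurd (hcX.1 hl) (by omega)
  obtain ⟨i, hir, hpair⟩ := key
  refine ⟨i, hir, hpair, ?_⟩
  have hi : p - m + 1 ≤ i := hir.1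
  have hi' : i + 1 ≤ q + n := by have := hir.2; omega
  rcases hpair with hp | hp | hp | hp | hp | hp
  · exact build_move m n p q i lam h1 h2 hbalZ hi hi' Label.vee Label.circ
      (Or.inl ⟨hp.1, hp.2, rfl, rfl⟩)
  · exact build_move m n p q i lam h1 h2 hbalZ hi hi' Label.wedge Label.circ
      (Or.inr (Or.inl ⟨hp.1, hp.2, rfl, rfl⟩))
  · exact build_move m n p q i lam h1 h2 hbalZ hi hi' Label.vee Label.wedge
      (Or.inr (Or.inr (Or.inl ⟨hp.1, hp.2, rfl, rfl⟩)))
  · exact build_move m n p q i lam h1 h2 hbalZ hi hi' Label.times Label.vee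
      (Or.inr (Or.inr (Or.inr (Or.inl ⟨hp.1, hp.2, rfl, rfl⟩))))
  · exact build_move m n p q i lam h1 h2 hbalZ hi hi' Label.times Label.wedge
      (Or.inr (Or.inr (Or.inr (Or.inr (Or.inl ⟨hp.1, hp.2, rfl, rfl⟩)))))
  · exact build_move m n p q i lam h1 h2 hbalZ hi hi' Label.times Label.circ
      (Or.inr (Or.inr (Or.inr (Or.inr (Or.inr ⟨hp.1, hp.2, rfl, rfl⟩)))))
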